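/- arXiv:2405.13439 — 2 statements merged into one kernel-verified Lean document; each statement's English description precedes it below -/
import Mathlib

section
/- For each fixed integer k ≥ 0, the sequence [n brack n−k] · ((n−k)!/n!)² converges to 1/(2^k k!) as n → ∞. -/
open Polynomial Filter Finset

/-- Unsigned Stirling numbers of the first kind. -/
noncomputable def stirling1 (n k : ℕ) : ℕ := (ascPochhammer ℕ n).coeff k

lemma stirling1_rec (n m : ℕ) :
    stirling1 (n+1) (m+1) = stirling1 n m + n * stirling1 n (m+1) := by
  unfold stirling1
  rw [ascPochhammer_succ_right, mul_add, coeff_add, coeff_mul_X]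
  congr 1
  rw [← C_eq_natCast, coeff_mul_C, mul_comm]
  rfl

lemma stirling1_self (n : ℕ) : stirling1 n n = 1 := by
  unfold stirling1
  have h1 := monic_ascPochhammer ℕ n
  have h2 := ascPochhammer_natDegree (S := ℕ) n
  calc (ascPochhammer ℕ n).coeff n = (ascPochhammer ℕ n).coeff (ascPochhammer ℕ n).natDegree := by rw [h2]
  _ = 1 := h1.coeff_natDegree

lemma stirling1_zero (n : ℕ) : stirling1 (n+1) 0 = 0 := by
  unfold stirling1
  rw [ascPochhammer_succ_left, mul_coeff_zero, coeff_X_zero, zero_mul]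

lemma pow_lb (a b : ℝ) (ha : 0 ≤ a) (hb : 0 ≤ b) :
    ∀ j : ℕ, a^(j+1) + (j+1)*b*a^j ≤ (a+b)^(j+1) := by
  intro j
  induction j with
  | zero => norm_num
  | succ j ih =>
    have e1 : a^(j+1+1) = a^(j+1) * a := pow_succ a (j+1)
    have e2 : a^(j+1) = a^j * a := pow_succ a j
    have e3 : (a+b)^(j+1+1) = (a+b)^(j+1) * (a+b) := pow_succ (a+b) (j+1)
    rw [e2] at ih
    have h2' : (a^j*a + ((j:ℝ)+1)*b*a^j) * (a+b) ≤ (a+b)^(j+1) * (a+b) :=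
      mul_le_mul_of_nonneg_right ih (by linarith)
    have hnn : 0 ≤ ((j:ℝ)+1)*(b*b*a^j) := by positivity
    rw [e3, e1, e2]
    push_cast
    nlinarith [h2', hnn]

lemma pow_ub (a b : ℝ) (ha : 0 ≤ a) (hb : 0 ≤ b) :
    ∀ j : ℕ, (a+b)^(j+1) ≤ a^(j+1) + (j+1)*b*(a+b)^j := by
  intro j
  induction j with
  | zero => norm_num
  | succ j ih =>
    have e1 : a^(j+1+1) = a^(j+1) * a := pow_succ a (j+1)
    have e3 : (a+b)^(j+1+1) = (a+b)^(j+1) * (a+b) := pow_succ (a+b) (j+1)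
    have e4 : (a+b)^(j+1) = (a+b)^j * (a+b) := pow_succ (a+b) j
    have h3 : a^(j+1) ≤ (a+b)^j * (a+b) := by
      rw [← e4]; exact pow_le_pow_left₀ ha (by linarith) _
    rw [e4] at ih
    have h2' : (a+b)^j * (a+b) * (a+b) ≤ (a^(j+1) + ((j:ℝ)+1)*b*(a+b)^j) * (a+b) :=
      mul_le_mul_of_nonneg_right ih (by linarith)
    have h4 : a^(j+1) * b ≤ (a+b)^j * (a+b) * b := mul_le_mul_of_nonneg_right h3 hb
    rw [e3, e1, e4]
    push_cast
    nlinarith [h2', h4]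

lemma stirling1_upper : ∀ (n : ℕ), ∀ k ≤ n,
    (k.factorial : ℝ) * stirling1 n (n-k) ≤ ((n:ℝ)*((n:ℝ)-1)/2)^k := by
  intro n
  induction n with
  | zero =>
    intro k hk
    interval_cases k
    simp [stirling1_self]
  | succ n ih =>
    intro k hk
    match k with
    | 0 => simp [stirling1_self]
    | (j+1) =>
      rcases Nat.lt_or_ge n (j+1) with h | h
      · have h0 : n + 1 - (j+1) = 0 := by omega
        rw [h0]
        have h1 : n + 1 = (n) + 1 := rfl
        rw [stirling1_zero]
        have hnn : (0:ℝ) ≤ ((n+1:ℕ):ℝ)*(((n+1:ℕ):ℝ)-1)/2 := by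
          push_cast
          have : ((n:ℝ)+1-1) = (n:ℝ) := by ring
          rw [this]
          positivity
        simp only [Nat.cast_zero, mul_zero]
        positivity
      · -- j+1 ≤ n
        have hrec : stirling1 (n+1) (n+1-(j+1)) = stirling1 n (n-(j+1)) + n * stirling1 n (n-j) := by
          have h1 : n + 1 - (j+1) = (n - (j+1)) + 1 := by omega
          have h2 : n - (j+1) + 1 = n - j := by omega
          rw [h1, stirling1_rec, h2]
        have IH1 := ih (j+1) h
        have IH2 := ih j (by omega)
        have hn1 : (1:ℝ) ≤ (n:ℝ) := by exact_mod_cast Nat.one_le_iff_ne_zero.mpr (by omega)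
        have hA : (0:ℝ) ≤ (n:ℝ)*((n:ℝ)-1)/2 := by nlinarith
        have hb := pow_lb ((n:ℝ)*((n:ℝ)-1)/2) (n:ℝ) hA (by positivity) j
        have f1 : (((j+1).factorial : ℕ) : ℝ) = ((j:ℝ)+1) * (j.factorial : ℝ) := by
          rw [Nat.factorial_succ]; push_cast; ring
        have IH2' : ((j:ℝ)+1)*(n:ℝ) * ((j.factorial:ℝ) * stirling1 n (n-j)) ≤
            ((j:ℝ)+1)*(n:ℝ) * (((n:ℝ)*((n:ℝ)-1)/2)^j) :=
          mul_le_mul_of_nonneg_left IH2 (by positivity)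
        have heq : ((n+1:ℕ):ℝ)*(((n+1:ℕ):ℝ)-1)/2 = (n:ℝ)*((n:ℝ)-1)/2 + (n:ℝ) := by
          push_cast; ring
        rw [hrec, heq, f1]
        push_cast
        nlinarith [IH1, IH2', hb]

lemma stirling1_lower : ∀ (n : ℕ), ∀ k ≤ n,
    (max ((n:ℝ)*((n:ℝ)-1)/2 - (k:ℝ)*(n:ℝ)) 0)^k ≤ (k.factorial : ℝ) * stirling1 n (n-k) := by
  intro n
  induction n with
  | zero =>
    intro k hk
    interval_cases k
    simp [stirling1_self]
  | succ n ih =>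
    intro k hk
    match k with
    | 0 => simp [stirling1_self]
    | (j+1) =>
      have heq : ((n+1:ℕ):ℝ)*(((n+1:ℕ):ℝ)-1)/2 - ((j+1:ℕ):ℝ)*((n+1:ℕ):ℝ)
          = (n:ℝ)*((n:ℝ)-1)/2 + (n:ℝ) - ((j:ℝ)+1)*((n:ℝ)+1) := by push_cast; ring
      rcases Nat.lt_or_ge n (j+1) with h | h
      · have h0 : n + 1 - (j+1) = 0 := by omega
        have hknn : j + 1 = n + 1 := by omega
        have hjr : (j:ℝ) = (n:ℝ) := by exact_mod_cast congrArg (fun x => x - 1) hknn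
        have hmax : max ((((n+1:ℕ)):ℝ)*((((n+1:ℕ)):ℝ)-1)/2 - (((j+1:ℕ)):ℝ)*(((n+1:ℕ)):ℝ)) 0 = 0 := by
          apply max_eq_right
          rw [heq, hjr]
          nlinarith [Nat.cast_nonneg (α := ℝ) n]
        rw [hmax]
        rw [zero_pow (by omega)]
        positivity
      · -- j+1 ≤ n
        have hrec : stirling1 (n+1) (n+1-(j+1)) = stirling1 n (n-(j+1)) + n * stirling1 n (n-j) := by
          have h1 : n + 1 - (j+1) = (n - (j+1)) + 1 := by omega
          have h2 : n - (j+1) + 1 = n - j := by omega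
          rw [h1, stirling1_rec, h2]
        have IH1 := ih (j+1) h
        have IH2 := ih j (by omega)
        have f1 : (((j+1).factorial : ℕ) : ℝ) = ((j:ℝ)+1) * (j.factorial : ℝ) := by
          rw [Nat.factorial_succ]; push_cast; ring
        set A : ℝ := (n:ℝ)*((n:ℝ)-1)/2 with hAdef
        set M : ℝ := max (A - (((j+1:ℕ)):ℝ)*(n:ℝ)) 0 with hMdef
        set M' : ℝ := max (A - (j:ℝ)*(n:ℝ)) 0 with hM'def
        set T : ℝ := max (A + (n:ℝ) - ((j:ℝ)+1)*((n:ℝ)+1)) 0 with hTdef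
        have hT0 : 0 ≤ T := le_max_right _ _
        have hM0 : 0 ≤ M := le_max_right _ _
        have hM'0 : 0 ≤ M' := le_max_right _ _
        have hTM' : T ≤ M' := by
          apply max_le
          · calc A + (n:ℝ) - ((j:ℝ)+1)*((n:ℝ)+1) ≤ A - (j:ℝ)*(n:ℝ) := by nlinarith [Nat.cast_nonneg (α := ℝ) j]
            _ ≤ M' := le_max_left _ _
          · exact hM'0
        rw [hrec, heq, ← hTdef, f1]
        push_cast
        -- goal now: T^(j+1) ≤ ((j+1) * j!) * (S1 + n * S2)
        rcases le_or_gt T M with hc | hc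
        · have h1 : T^(j+1) ≤ M^(j+1) := pow_le_pow_left₀ hT0 hc _
          have h2 : (0:ℝ) ≤ (n:ℝ) * (stirling1 n (n-j) : ℝ) := by positivity
          have h3 : (0:ℝ) ≤ ((j:ℝ)+1) * (j.factorial : ℝ) := by positivity
          rw [f1] at IH1
          nlinarith [IH1, mul_le_mul_of_nonneg_left h2 h3]
        · have hTpos : 0 < T := lt_of_le_of_lt hM0 hc
          have hTeq : T = A + (n:ℝ) - ((j:ℝ)+1)*((n:ℝ)+1) := by
            rcases max_cases (A + (n:ℝ) - ((j:ℝ)+1)*((n:ℝ)+1)) 0 with ⟨h1,h2⟩ | ⟨h1,h2⟩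
            · rw [hTdef, h1]
            · exfalso; rw [hTdef] at hTpos; rw [h1] at hTpos; exact lt_irrefl 0 hTpos
          have hMge : A - (((j+1:ℕ)):ℝ)*(n:ℝ) ≤ M := le_max_left _ _
          have hble : T - M ≤ (n:ℝ) := by
            push_cast at hMge
            rw [hTeq]
            linarith
          have hub := pow_ub M (T - M) hM0 (by linarith) j
          have hMT : M + (T - M) = T := by ring
          rw [hMT] at hub
          have hTj : T^j ≤ M'^j := pow_le_pow_left₀ hT0 hTM' j
          have h5 : (T - M) * T^j ≤ (n:ℝ) * M'^j :=
            mul_le_mul hble hTj (pow_nonneg hT0 j) (Nat.cast_nonneg n)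
          have h6 : ((j:ℝ)+1) * ((T-M) * T^j) ≤ ((j:ℝ)+1) * ((n:ℝ) * M'^j) :=
            mul_le_mul_of_nonneg_left h5 (by positivity)
          have IH2' : ((j:ℝ)+1)*(n:ℝ) * (M'^j) ≤ ((j:ℝ)+1)*(n:ℝ) * ((j.factorial:ℝ) * stirling1 n (n-j)) :=
            mul_le_mul_of_nonneg_left IH2 (by positivity)
          rw [f1] at IH1
          linarith [IH1, IH2', hub, h6]


lemma tendsto_ratio (i : ℕ) : Tendsto (fun n : ℕ => (n:ℝ)/((n:ℝ) - i)) atTop (nhds 1) := by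
  have h1 : Tendsto (fun n : ℕ => ((n:ℝ) - i)) atTop atTop := by
    simpa [sub_eq_add_neg] using tendsto_atTop_add_const_right atTop (-(i:ℝ)) tendsto_natCast_atTop_atTop
  have h2 : Tendsto (fun n : ℕ => (i:ℝ)/((n:ℝ)-i)) atTop (nhds 0) :=
    Tendsto.div_atTop tendsto_const_nhds h1
  have h3 : Tendsto (fun n : ℕ => 1 + (i:ℝ)/((n:ℝ)-i)) atTop (nhds 1) := by
    simpa using h2.const_add 1
  apply h3.congr'
  filter_upwards [eventually_ge_atTop (i+1)] with n hn
  have hne : (n:ℝ) - i ≠ 0 := by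
    have : (i:ℝ) + 1 ≤ (n:ℝ) := by exact_mod_cast hn
    intro h; nlinarith
  field_simp
  ring

lemma fact_prod (n k : ℕ) (h : k ≤ n) :
    ((n.factorial : ℕ) : ℝ) = (∏ i ∈ Finset.range k, ((n:ℝ) - i)) * ((n-k).factorial : ℝ) := by
  have h1 := Nat.factorial_mul_descFactorial h
  have h2 := Nat.descFactorial_eq_prod_range n k
  have : (n.factorial : ℕ) = (∏ i ∈ Finset.range k, (n - i : ℕ)) * ((n-k).factorial) := by
    rw [← h1, ← h2, mul_comm]
  rw [this]
  push_cast
  rw [Finset.prod_congr rfl]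
  intro i hi
  rw [Nat.cast_sub (by simp at hi; omega)]

lemma c_tendsto (k : ℕ) :
    Tendsto (fun n : ℕ => (n:ℝ)^k * ((n-k).factorial : ℝ) / (n.factorial : ℝ)) atTop (nhds 1) := by
  have hprod : Tendsto (fun n : ℕ => ∏ i ∈ Finset.range k, (n:ℝ)/((n:ℝ)-i)) atTop
      (nhds (∏ _i ∈ Finset.range k, (1:ℝ))) :=
    tendsto_finset_prod _ (fun i _ => tendsto_ratio i)
  simp only [Finset.prod_const_one] at hprod
  apply hprod.congr'
  filter_upwards [eventually_ge_atTop (k+1)] with n hn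
  have hkn : k ≤ n := by omega
  have hpos : ∀ i ∈ Finset.range k, (0:ℝ) < (n:ℝ) - i := by
    intro i hi
    simp at hi
    have : (i:ℝ) + 1 ≤ (n:ℝ) := by exact_mod_cast (by omega : i + 1 ≤ n)
    linarith
  have hPne : (∏ i ∈ Finset.range k, ((n:ℝ) - i)) ≠ 0 :=
    ne_of_gt (Finset.prod_pos hpos)
  rw [Finset.prod_div_distrib, Finset.prod_const, Finset.card_range, fact_prod n k hkn]
  rw [mul_comm (∏ i ∈ Finset.range k, ((n:ℝ) - i)) _, ← div_div, mul_div_assoc]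
  rw [div_self (by positivity : ((n-k).factorial : ℝ) ≠ 0), mul_one]

lemma tendsto_one_sub (c : ℝ) : Tendsto (fun n : ℕ => 1 - c/(n:ℝ)) atTop (nhds 1) := by
  have := tendsto_const_div_atTop_nhds_zero_nat c
  simpa using tendsto_const_nhds.sub this


theorem stmt_3 (k : ℕ) :
    Tendsto (fun n : ℕ =>
        (stirling1 n (n - k) : ℝ) * ((Nat.factorial (n - k) : ℝ) / Nat.factorial n) ^ 2)
      atTop (nhds (1 / (2 ^ k * Nat.factorial k))) := by
  have hkf : (0:ℝ) < (k.factorial : ℝ) := by exact_mod_cast k.factorial_pos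
  set c₀ : ℝ := 1 / (2 ^ k * Nat.factorial k) with hc₀
  have hc := c_tendsto k
  have hU : Tendsto (fun n : ℕ => ((n:ℝ)*((n:ℝ)-1)/2)^k / (k.factorial:ℝ) *
      (((n-k).factorial : ℝ)/(n.factorial : ℝ))^2) atTop (nhds c₀) := by
    have hT : Tendsto (fun n : ℕ => c₀ * ((1 - 1/(n:ℝ))^k *
        ((n:ℝ)^k * ((n-k).factorial:ℝ)/(n.factorial:ℝ))^2)) atTop (nhds (c₀ * (1^k * 1^2))) :=
      (((tendsto_one_sub 1).pow k).mul (hc.pow 2)).const_mul c₀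
    have hone : c₀ * ((1:ℝ)^k * 1^2) = c₀ := by norm_num
    rw [hone] at hT
    apply hT.congr'
    filter_upwards [eventually_ge_atTop 1] with n hn
    have hn0 : (n:ℝ) ≠ 0 := by exact Nat.cast_ne_zero.mpr (by omega)
    have hN : (n.factorial:ℝ) ≠ 0 := by positivity
    rw [hc₀]
    field_simp
    rw [div_pow, div_pow, mul_pow]
    field_simp
  have hL : Tendsto (fun n : ℕ => (max ((n:ℝ)*((n:ℝ)-1)/2 - (k:ℝ)*(n:ℝ)) 0)^k / (k.factorial:ℝ) *
      (((n-k).factorial : ℝ)/(n.factorial : ℝ))^2) atTop (nhds c₀) := by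
    have hT : Tendsto (fun n : ℕ => c₀ * ((1 - (2*(k:ℝ)+1)/(n:ℝ))^k *
        ((n:ℝ)^k * ((n-k).factorial:ℝ)/(n.factorial:ℝ))^2)) atTop (nhds (c₀ * (1^k * 1^2))) :=
      (((tendsto_one_sub (2*(k:ℝ)+1)).pow k).mul (hc.pow 2)).const_mul c₀
    have hone : c₀ * ((1:ℝ)^k * 1^2) = c₀ := by norm_num
    rw [hone] at hT
    apply hT.congr'
    filter_upwards [eventually_ge_atTop (2*k+1)] with n hn
    have hcast : (2*(k:ℝ)+1) ≤ (n:ℝ) := by exact_mod_cast hn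
    have hn0 : (n:ℝ) ≠ 0 := by exact Nat.cast_ne_zero.mpr (by omega)
    have hN : (n.factorial:ℝ) ≠ 0 := by positivity
    have hmax : max ((n:ℝ)*((n:ℝ)-1)/2 - (k:ℝ)*(n:ℝ)) 0 = (n:ℝ)*((n:ℝ)-1)/2 - (k:ℝ)*(n:ℝ) := by
      apply max_eq_left
      nlinarith [Nat.cast_nonneg (α := ℝ) k]
    rw [hmax, hc₀]
    field_simp
    rw [show ((n:ℝ) - 1 - 2 * (k:ℝ) : ℝ) = (n:ℝ) - (2*(k:ℝ)+1) by ring, div_pow, div_pow, mul_pow]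
    field_simp
  apply tendsto_of_tendsto_of_tendsto_of_le_of_le' hL hU
  · filter_upwards [eventually_ge_atTop k] with n hn
    have hlow := stirling1_lower n k hn
    have hq : (0:ℝ) ≤ (((n-k).factorial : ℝ)/(n.factorial : ℝ))^2 := sq_nonneg _
    have h' : (max ((n:ℝ)*((n:ℝ)-1)/2 - (k:ℝ)*(n:ℝ)) 0)^k / (k.factorial:ℝ) ≤
        (stirling1 n (n-k) : ℝ) := by
      rw [div_le_iff₀ hkf]
      linarith
    exact mul_le_mul_of_nonneg_right h' hq
  · filter_upwards [eventually_ge_atTop k] with n hn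
    have hup := stirling1_upper n k hn
    have hq : (0:ℝ) ≤ (((n-k).factorial : ℝ)/(n.factorial : ℝ))^2 := sq_nonneg _
    have h' : (stirling1 n (n-k) : ℝ) ≤ ((n:ℝ)*((n:ℝ)-1)/2)^k / (k.factorial:ℝ) := by
      rw [le_div_iff₀ hkf]
      linarith
    exact mul_le_mul_of_nonneg_right h' hq
end

section
/- In the graphical-representation insertion model, for each fiber ℓ ∈ {1,...,n+1} (the row of cells C_n(k,ℓ), k = 1,...,n+1), exactly n − D_n of the n+1 cells yield descent increment +1 and exactly D_n + 1 cells yield increment 0, where D_n is the number of descents of π_n. -/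
/-- Number of descents of a permutation of `Fin n`. -/
def descNum {n : ℕ} (σ : Equiv.Perm (Fin n)) : ℕ :=
  (Finset.univ.filter fun p : Fin n × Fin n =>
    (p.1 : ℕ) + 1 = (p.2 : ℕ) ∧ σ p.2 < σ p.1).card

/-- Insertion of a point in cell `(k, ℓ)` of the graphical representation of `σ`:
the new permutation sends `k ↦ ℓ` and otherwise acts as `σ` on the remaining
positions/values (via `succAbove`). -/
def insertPerm {n : ℕ} (σ : Equiv.Perm (Fin n)) (k ℓ : Fin (n + 1)) :
    Equiv.Perm (Fin (n + 1)) :=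
  (finSuccEquiv' k).trans ((Equiv.optionCongr σ).trans (finSuccEquiv' ℓ).symm)

lemma insertPerm_apply_self {n : ℕ} (σ : Equiv.Perm (Fin n)) (k ℓ : Fin (n + 1)) :
    insertPerm σ k ℓ k = ℓ := by
  simp [insertPerm]

lemma insertPerm_apply_succAbove {n : ℕ} (σ : Equiv.Perm (Fin n)) (k ℓ : Fin (n + 1))
    (j : Fin n) : insertPerm σ k ℓ (k.succAbove j) = ℓ.succAbove (σ j) := by
  simp [insertPerm, finSuccEquiv'_succAbove, finSuccEquiv'_symm_some]

def desN (f : ℕ → ℕ) (m : ℕ) : ℕ := ∑ i ∈ Finset.range m, if f (i+1) < f i then 1 else 0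

lemma desN_insert (b g : ℕ → ℕ) (l n k : ℕ) (hk : k ≤ n)
    (hg1 : ∀ j < k, g j = b j) (hg2 : g k = l) (hg3 : ∀ j, k < j → j ≤ n → g j = b (j-1)) :
    desN g n + (if 0 < k ∧ k < n ∧ b k < b (k-1) then 1 else 0)
      = desN b (n-1) + (if 0 < k ∧ l < b (k-1) then 1 else 0)
        + (if k < n ∧ b k < l then 1 else 0) := by
  rcases Nat.eq_zero_or_pos k with hk0 | hkpos
  · subst hk0
    simp only [lt_irrefl, false_and, if_false, add_zero]
    cases n with
    | zero => simp [desN]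
    | succ m =>
      have h0 : desN g (m+1) = (∑ i ∈ Finset.range m, if g (i+1+1) < g (i+1) then 1 else 0)
          + (if g 1 < g 0 then 1 else 0) := Finset.sum_range_succ' _ m
      have h1 : ∀ i < m, (if g (i+1+1) < g (i+1) then 1 else 0)
          = (if b (i+1) < b i then 1 else 0) := by
        intro i hi
        rw [hg3 (i+1) (by omega) (by omega), hg3 (i+1+1) (by omega) (by omega)]
        norm_num
      have h2 : g 1 = b 0 := by rw [hg3 1 (by omega) (by omega)]
      rw [h0, Finset.sum_congr rfl (fun i hi => h1 i (Finset.mem_range.mp hi)), h2, hg2]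
      have hmb : (0 < m + 1 ∧ b 0 < l) ↔ (b 0 < l) := by simp
      simp only [desN, Nat.add_sub_cancel, hmb]
  · rcases eq_or_lt_of_le hk with hkn | hkn
    · -- k = n, k > 0
      subst hkn
      simp only [lt_irrefl, and_false, false_and, if_false, add_zero]
      obtain ⟨m, rfl⟩ : ∃ m, k = m + 1 := ⟨k - 1, by omega⟩
      have h0 : desN g (m+1) = (∑ i ∈ Finset.range m, if g (i+1) < g i then 1 else 0)
          + (if g (m+1) < g m then 1 else 0) := Finset.sum_range_succ _ m
      have h1 : ∀ i < m, (if g (i+1) < g i then 1 else 0) = (if b (i+1) < b i then 1 else 0) := by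
        intro i hi
        rw [hg1 i (by omega), hg1 (i+1) (by omega)]
      have h2 : g m = b m := hg1 m (by omega)
      rw [h0, Finset.sum_congr rfl (fun i hi => h1 i (Finset.mem_range.mp hi)), h2, hg2]
      simp only [desN, Nat.add_sub_cancel, Nat.succ_sub_one]
      by_cases hbl : l < b m <;> simp [hbl]
    · -- 0 < k < n
      have Fg : ℕ → ℕ := fun i => if g (i+1) < g i then 1 else 0
      have e1 : desN g n
          = (∑ i ∈ Finset.Ico 0 (k-1), if g (i+1) < g i then 1 else 0)
            + ((if g k < g (k-1) then 1 else 0) + (if g (k+1) < g k then 1 else 0))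
            + (∑ i ∈ Finset.Ico (k+1) n, if g (i+1) < g i then 1 else 0) := by
        have s1 := Finset.sum_Ico_consecutive (fun i => if g (i+1) < g i then 1 else 0)
          (Nat.zero_le (k-1)) (by omega : k - 1 ≤ k + 1)
        have s2 := Finset.sum_Ico_consecutive (fun i => if g (i+1) < g i then 1 else 0)
          (by omega : 0 ≤ k + 1) (by omega : k + 1 ≤ n)
        have s3 : (∑ i ∈ Finset.Ico (k-1) (k+1), if g (i+1) < g i then 1 else 0)
            = (if g k < g (k-1) then 1 else 0) + (if g (k+1) < g k then 1 else 0) := by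
          rw [Finset.sum_Ico_eq_sum_range]
          have : k + 1 - (k-1) = 2 := by omega
          rw [this, Finset.sum_range_succ, Finset.sum_range_one]
          have e1 : k - 1 + 0 = k - 1 := by omega
          have e2 : k - 1 + 1 = k := by omega
          rw [e1, e2]
        rw [desN, Finset.range_eq_Ico, ← s2, ← s1, s3]
      have e2 : desN b (n-1)
          = (∑ i ∈ Finset.Ico 0 (k-1), if b (i+1) < b i then 1 else 0)
            + (if b k < b (k-1) then 1 else 0)
            + (∑ i ∈ Finset.Ico k (n-1), if b (i+1) < b i then 1 else 0) := by
        have s1 := Finset.sum_Ico_consecutive (fun i => if b (i+1) < b i then 1 else 0)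
          (Nat.zero_le (k-1)) (by omega : k - 1 ≤ k)
        have s2 := Finset.sum_Ico_consecutive (fun i => if b (i+1) < b i then 1 else 0)
          (by omega : 0 ≤ k) (by omega : k ≤ n - 1)
        have s3 : (∑ i ∈ Finset.Ico (k-1) k, if b (i+1) < b i then 1 else 0)
            = (if b k < b (k-1) then 1 else 0) := by
          rw [Finset.sum_Ico_eq_sum_range]
          have : k - (k-1) = 1 := by omega
          rw [this, Finset.sum_range_one]
          have e2 : k - 1 + 0 + 1 = k := by omega
          have e3 : k - 1 + 0 = k - 1 := by omega
          rw [e2, e3]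
        rw [desN, Finset.range_eq_Ico, ← s2, ← s1, s3]
      -- matching pieces
      have m1 : (∑ i ∈ Finset.Ico 0 (k-1), if g (i+1) < g i then 1 else 0)
          = (∑ i ∈ Finset.Ico 0 (k-1), if b (i+1) < b i then 1 else 0) := by
        apply Finset.sum_congr rfl
        intro i hi
        rw [Finset.mem_Ico] at hi
        rw [hg1 i (by omega), hg1 (i+1) (by omega)]
      have m2 : (if g k < g (k-1) then 1 else 0) = (if l < b (k-1) then (1:ℕ) else 0) := by
        rw [hg2, hg1 (k-1) (by omega)]
      have m3 : (if g (k+1) < g k then 1 else 0) = (if b k < l then (1:ℕ) else 0) := by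
        rw [hg2, hg3 (k+1) (by omega) (by omega)]
        norm_num
      have m4 : (∑ i ∈ Finset.Ico (k+1) n, if g (i+1) < g i then 1 else 0)
          = (∑ i ∈ Finset.Ico k (n-1), if b (i+1) < b i then 1 else 0) := by
        rw [Finset.sum_Ico_eq_sum_range, Finset.sum_Ico_eq_sum_range]
        have : n - (k+1) = n - 1 - k := by omega
        rw [this]
        apply Finset.sum_congr rfl
        intro i hi
        rw [Finset.mem_range] at hi
        rw [hg3 (k+1+i) (by omega) (by omega), hg3 (k+1+i+1) (by omega) (by omega)]
        have e1 : k + 1 + i - 1 = k + i := by omega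
        have e2 : k + 1 + i + 1 - 1 = k + i + 1 := by omega
        rw [e1, e2]
      rw [e1, e2, m1, m2, m3, m4]
      have hC : (0 < k ∧ k < n ∧ b k < b (k-1)) ↔ (b k < b (k-1)) := by
        constructor; · tauto
        · intro h; exact ⟨hkpos, hkn, h⟩
      have hA : (0 < k ∧ l < b (k-1)) ↔ (l < b (k-1)) := by
        constructor; · tauto
        · intro h; exact ⟨hkpos, h⟩
      have hB : (k < n ∧ b k < l) ↔ (b k < l) := by
        constructor; · tauto
        · intro h; exact ⟨hkn, h⟩
      rw [if_congr hC rfl rfl, if_congr hA rfl rfl, if_congr hB rfl rfl]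
      ring

lemma descNum_eq_desN {m : ℕ} (τ : Equiv.Perm (Fin m)) (F : ℕ → ℕ)
    (hF : ∀ i j : Fin m, F i < F j ↔ τ i < τ j) :
    descNum τ = desN F (m - 1) := by
  rw [descNum, desN, ← Finset.card_filter]
  refine Finset.card_bij' (fun p _ => (p.1 : ℕ))
    (fun i hi => (⟨i, by
        rw [Finset.mem_filter, Finset.mem_range] at hi; omega⟩,
      ⟨i + 1, by rw [Finset.mem_filter, Finset.mem_range] at hi; omega⟩))
    ?_ ?_ ?_ ?_
  · intro p hp
    rw [Finset.mem_filter] at hp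
    obtain ⟨-, h1, h2⟩ := hp
    simp only [Finset.mem_filter, Finset.mem_range]
    have hp2 : (p.2 : ℕ) < m := p.2.isLt
    have hFlt : F (p.2 : ℕ) < F (p.1 : ℕ) := (hF p.2 p.1).mpr h2
    rw [← h1] at hFlt
    exact ⟨by omega, hFlt⟩
  · intro i hi
    rw [Finset.mem_filter, Finset.mem_range] at hi
    obtain ⟨-, h2⟩ := hi
    rw [Finset.mem_filter]
    refine ⟨Finset.mem_univ _, by simp, ?_⟩
    rw [← hF]
    exact h2
  · intro p hp
    rw [Finset.mem_filter] at hp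
    obtain ⟨-, h1, -⟩ := hp
    ext <;> simp [h1]
  · intro i hi
    rfl

/-- In each fiber (row `ℓ` of cells), exactly `n - D_n` of the `n+1` insertion cells
increase the descent count by 1, and exactly `D_n + 1` leave it unchanged. -/
theorem stmt_12 (n : ℕ) (σ : Equiv.Perm (Fin n)) (ℓ : Fin (n + 1)) :
    ((Finset.univ.filter fun k : Fin (n + 1) =>
        descNum (insertPerm σ k ℓ) = descNum σ + 1).card : ℤ) = (n : ℤ) - descNum σ ∧
    (Finset.univ.filter fun k : Fin (n + 1) =>
        descNum (insertPerm σ k ℓ) = descNum σ).card = descNum σ + 1 := by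
  rcases Nat.eq_zero_or_pos n with rfl | hn
  · have h0 : descNum σ = 0 := by simp [descNum]
    have h1 : ∀ k : Fin 1, descNum (insertPerm σ k ℓ) = 0 := by
      intro k
      rw [descNum, Finset.card_eq_zero, Finset.filter_eq_empty_iff]
      intro p _
      rintro ⟨hc, -⟩
      have e1 := p.1.isLt
      have e2 := p.2.isLt
      omega
    constructor
    · have he : (Finset.univ.filter fun k : Fin 1 =>
          descNum (insertPerm σ k ℓ) = descNum σ + 1) = ∅ := by
        rw [Finset.filter_eq_empty_iff]
        intro k _
        rw [h1 k, h0]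
        omega
      rw [he, h0]
      simp
    · have he : (Finset.univ.filter fun k : Fin 1 =>
          descNum (insertPerm σ k ℓ) = descNum σ) = Finset.univ := by
        rw [Finset.filter_eq_self]
        intro k _
        rw [h1 k, h0]
      rw [he, h0]
      simp
  · -- main case, n ≥ 1
    set D := descNum σ with hD
    set b : ℕ → ℕ := fun j => if h : j < n then (ℓ.succAbove (σ ⟨j, h⟩) : ℕ) else 0 with hb
    set aF : ℕ → ℕ := fun i => if 0 < i ∧ (ℓ : ℕ) < b (i - 1) then 1 else 0 with haF
    set bF : ℕ → ℕ := fun i => if i < n ∧ b i < (ℓ : ℕ) then 1 else 0 with hbF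
    set cF : ℕ → ℕ := fun i => if 0 < i ∧ i < n ∧ b i < b (i - 1) then 1 else 0 with hcF
    have hbval : ∀ i : Fin n, b (i : ℕ) = (ℓ.succAbove (σ i) : ℕ) := by
      intro i
      rw [hb]
      simp only []
      rw [dif_pos i.isLt, Fin.eta]
    have hbσ : D = desN b (n - 1) := by
      apply descNum_eq_desN
      intro i j
      rw [hbval i, hbval j, ← Fin.lt_def]
      exact (Fin.strictMono_succAbove ℓ).lt_iff_lt
    -- per-slot identity
    have key : ∀ k : Fin (n + 1),
        descNum (insertPerm σ k ℓ) + cF (k : ℕ) = D + aF (k : ℕ) + bF (k : ℕ) := by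
      intro k
      set π := insertPerm σ k ℓ with hπ
      set g : ℕ → ℕ := fun j => if h : j < n + 1 then (π ⟨j, h⟩ : ℕ) else 0 with hg
      have hgval : ∀ j (h : j < n + 1), g j = (π ⟨j, h⟩ : ℕ) := by
        intro j h
        rw [hg]
        simp only []
        rw [dif_pos h]
      have hbπ : descNum π = desN g n := by
        have := descNum_eq_desN π g ?_
        · simpa using this
        · intro i j
          rw [hgval _ i.isLt, hgval _ j.isLt, Fin.eta, Fin.eta, ← Fin.lt_def]
      have hg1 : ∀ j < (k : ℕ), g j = b j := by
        intro j hj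
        have hjn : j < n := by have := k.isLt; omega
        have hsa : k.succAbove ⟨j, hjn⟩ = ⟨j, by omega⟩ := by
          rw [Fin.succAbove_of_castSucc_lt]
          · rfl
          · rw [Fin.lt_def]
            simpa using hj
        rw [hgval j (by omega), ← hsa, hπ, insertPerm_apply_succAbove, hb]
        simp only []
        rw [dif_pos hjn]
      have hg2 : g (k : ℕ) = (ℓ : ℕ) := by
        rw [hgval _ k.isLt, Fin.eta, hπ, insertPerm_apply_self]
      have hg3 : ∀ j, (k : ℕ) < j → j ≤ n → g j = b (j - 1) := by
        intro j hkj hjn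
        have hj1 : j - 1 < n := by omega
        have hsa : k.succAbove ⟨j - 1, hj1⟩ = ⟨j, by omega⟩ := by
          rw [Fin.succAbove_of_le_castSucc]
          · apply Fin.ext
            simp only [Fin.val_succ]
            omega
          · rw [Fin.le_def]
            simp only [Fin.coe_castSucc]
            omega
        rw [hgval j (by omega), ← hsa, hπ, insertPerm_apply_succAbove, hb]
        simp only []
        rw [dif_pos hj1]
      have hins := desN_insert b g (ℓ : ℕ) n (k : ℕ) (by have := k.isLt; omega) hg1 hg2 hg3
      rw [hbπ, hbσ, haF, hbF, hcF]
      simpa using hins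
    -- dichotomy
    have dich : ∀ k : Fin (n + 1),
        descNum (insertPerm σ k ℓ) = D ∨ descNum (insertPerm σ k ℓ) = D + 1 := by
      intro k
      have hk := key k
      rw [haF, hbF, hcF] at hk
      simp only [] at hk
      split_ifs at hk <;> omega
    -- sum of the per-slot identities
    have sumkey : (∑ k : Fin (n + 1), descNum (insertPerm σ k ℓ)) + (∑ k : Fin (n + 1), cF (k : ℕ))
        = (n + 1) * D + ((∑ k : Fin (n + 1), aF (k : ℕ)) + (∑ k : Fin (n + 1), bF (k : ℕ))) := by
      have h1 : ∑ k : Fin (n + 1), (descNum (insertPerm σ k ℓ) + cF (k : ℕ))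
          = ∑ k : Fin (n + 1), (D + aF (k : ℕ) + bF (k : ℕ)) :=
        Finset.sum_congr rfl fun k _ => key k
      rw [Finset.sum_add_distrib] at h1
      rw [h1, Finset.sum_add_distrib, Finset.sum_add_distrib, Finset.sum_const,
        Finset.card_univ, Fintype.card_fin, smul_eq_mul]
      ring
    -- ∑ cF = D
    have hCsum : (∑ k : Fin (n + 1), cF (k : ℕ)) = D := by
      rw [Fin.sum_univ_eq_sum_range cF (n + 1), Finset.sum_range_succ' cF n]
      have c0 : cF 0 = 0 := by rw [hcF]; simp
      rw [c0, add_zero]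
      have step1 : (∑ i ∈ Finset.range n, cF (i + 1))
          = ∑ i ∈ Finset.range (n - 1), cF (i + 1) := by
        symm
        apply Finset.sum_subset
        · intro x hx
          rw [Finset.mem_range] at hx ⊢
          omega
        · intro x hx hx'
          rw [Finset.mem_range] at hx hx'
          have hxe : x = n - 1 := by omega
          rw [hcF]
          simp only []
          rw [if_neg]
          rintro ⟨-, h2, -⟩
          omega
      rw [step1, hbσ, desN]
      apply Finset.sum_congr rfl
      intro i hi
      rw [Finset.mem_range] at hi
      rw [hcF]
      simp only [Nat.add_sub_cancel]
      rw [if_congr (show (0 < i + 1 ∧ i + 1 < n ∧ b (i + 1) < b i) ↔ b (i + 1) < b i by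
        constructor
        · tauto
        · intro h; exact ⟨by omega, by omega, h⟩) rfl rfl]
    -- ∑ aF + ∑ bF = n
    have hABsum : (∑ k : Fin (n + 1), aF (k : ℕ)) + (∑ k : Fin (n + 1), bF (k : ℕ)) = n := by
      have hA : (∑ k : Fin (n + 1), aF (k : ℕ))
          = ∑ i ∈ Finset.range n, (if (ℓ : ℕ) < b i then 1 else 0) := by
        rw [Fin.sum_univ_eq_sum_range aF (n + 1), Finset.sum_range_succ' aF n]
        have a0 : aF 0 = 0 := by rw [haF]; simp
        rw [a0, add_zero]
        apply Finset.sum_congr rfl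
        intro i hi
        rw [haF]
        simp only [Nat.add_sub_cancel]
        rw [if_congr (show (0 < i + 1 ∧ (ℓ : ℕ) < b i) ↔ (ℓ : ℕ) < b i by
          constructor
          · tauto
          · intro h; exact ⟨by omega, h⟩) rfl rfl]
      have hB : (∑ k : Fin (n + 1), bF (k : ℕ))
          = ∑ i ∈ Finset.range n, (if b i < (ℓ : ℕ) then 1 else 0) := by
        rw [Fin.sum_univ_eq_sum_range bF (n + 1), Finset.sum_range_succ bF n]
        have b0 : bF n = 0 := by rw [hbF]; simp
        rw [b0, add_zero]
        apply Finset.sum_congr rfl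
        intro i hi
        rw [Finset.mem_range] at hi
        rw [hbF]
        simp only []
        rw [if_congr (show (i < n ∧ b i < (ℓ : ℕ)) ↔ b i < (ℓ : ℕ) by
          constructor
          · tauto
          · intro h; exact ⟨hi, h⟩) rfl rfl]
      rw [hA, hB, ← Finset.sum_add_distrib]
      have : ∀ i ∈ Finset.range n,
          ((if (ℓ : ℕ) < b i then 1 else 0) + (if b i < (ℓ : ℕ) then 1 else 0)) = 1 := by
        intro i hi
        rw [Finset.mem_range] at hi
        have hne : b i ≠ (ℓ : ℕ) := by
          rw [hb]
          simp only []
          rw [dif_pos hi]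
          intro hcon
          exact Fin.succAbove_ne ℓ (σ ⟨i, hi⟩) (Fin.val_injective hcon)
        split_ifs <;> omega
      rw [Finset.sum_congr rfl this, Finset.sum_const, Finset.card_range, smul_eq_mul, mul_one]
    -- counting
    have split1 := Finset.sum_filter_add_sum_filter_not Finset.univ
      (fun k : Fin (n + 1) => descNum (insertPerm σ k ℓ) = D)
      (fun k => descNum (insertPerm σ k ℓ))
    have hS0 : (∑ k ∈ Finset.univ.filter
        (fun k : Fin (n + 1) => descNum (insertPerm σ k ℓ) = D), descNum (insertPerm σ k ℓ))
        = (Finset.univ.filter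
            (fun k : Fin (n + 1) => descNum (insertPerm σ k ℓ) = D)).card * D := by
      rw [Finset.sum_congr rfl (fun k hk => (Finset.mem_filter.mp hk).2), Finset.sum_const,
        smul_eq_mul]
    have hS1 : (∑ k ∈ Finset.univ.filter
        (fun k : Fin (n + 1) => ¬ descNum (insertPerm σ k ℓ) = D), descNum (insertPerm σ k ℓ))
        = (Finset.univ.filter
            (fun k : Fin (n + 1) => ¬ descNum (insertPerm σ k ℓ) = D)).card * (D + 1) := by
      rw [Finset.sum_congr rfl (fun k hk => ?_), Finset.sum_const, smul_eq_mul]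
      have hm := (Finset.mem_filter.mp hk).2
      have := dich k
      omega
    have hfiltereq : Finset.univ.filter (fun k : Fin (n + 1) => ¬ descNum (insertPerm σ k ℓ) = D)
        = Finset.univ.filter (fun k : Fin (n + 1) => descNum (insertPerm σ k ℓ) = D + 1) := by
      apply Finset.filter_congr
      intro k _
      have := dich k
      constructor <;> intro h <;> omega
    have hcards := Finset.card_filter_add_card_filter_not
      (s := Finset.univ) (p := fun k : Fin (n + 1) => descNum (insertPerm σ k ℓ) = D)
    rw [Finset.card_univ, Fintype.card_fin] at hcards
    set c0 := (Finset.univ.filter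
      (fun k : Fin (n + 1) => descNum (insertPerm σ k ℓ) = D)).card with hc0
    set c1 := (Finset.univ.filter
      (fun k : Fin (n + 1) => ¬ descNum (insertPerm σ k ℓ) = D)).card with hc1
    have main : c0 * D + c1 * (D + 1) + D = (n + 1) * D + n := by
      rw [← hS0, ← hS1, split1, ← hCsum]
      rw [sumkey, hABsum, hCsum]
    have main2 : (n + 1) * D + c1 + D = (n + 1) * D + n := by
      have e3 : c0 * D + c1 * (D + 1) = (c0 + c1) * D + c1 := by ring
      rw [e3, hcards] at main
      exact main
    have hc1n : c1 + D = n := by omega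
    constructor
    · rw [← hfiltereq, ← hc1]
      omega
    · omega
end
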